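/- arXiv:1202.5811 — 2 statements merged into one kernel-verified Lean document; each statement's English description precedes it below -/
import Mathlib

section
/- Let T be a third order source form. Then its Helmholtz components satisfy the integrability conditions, for all a,b,c,d (summation over repeated indices i,j,k): (1) H^{ab;cd,∅} + H^{cd;ab,∅} = D_i H^{ab;cd,i} − D_i D_j H^{ab;cd,ij} + D_i D_j D_k H^{ab;cd,ijk}; (2) H^{ab;cd,i} − H^{cd;ab,i} = 2 D_j H^{ab;cd,ij} − 3 D_j D_k H^{ab;cd,ijk}; (3) H^{ab;cd,ij} + H^{cd;ab,ij} = 3 D_k H^{ab;cd,ijk}; (4) H^{ab;cd,ijk} − H^{cd;ab,ijk} = 0. -/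
open scoped BigOperators

namespace JetMetric

/-- Unordered multi-indices: multisets of coordinate indices. -/
abbrev MIdx (m : ℕ) := Multiset (Fin m)

/-- The (infinite) jet space of metrics on ℝ^m: base coordinates `x^i` together with
all derivative coordinates `g_{ab,I}`. -/
abbrev Jet (m : ℕ) := (Fin m → ℝ) × (Fin m → Fin m → MIdx m → ℝ)

/-- The zeroth order coordinates `g_{ab}` as a matrix. -/
noncomputable def gMat {m : ℕ} (z : Jet m) : Matrix (Fin m) (Fin m) ℝ :=
  Matrix.of fun a b => z.2 a b 0

/-- The domain of interest: symmetric jets with nondegenerate metric. -/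
def JetDom (m : ℕ) : Set (Jet m) :=
  {z | (∀ a b I, z.2 a b I = z.2 b a I) ∧ (gMat z).det ≠ 0}

/-- The symmetrized pair delta `δ^a_{(c} δ^b_{d)}`. -/
noncomputable def pairWt {m : ℕ} (a b c d : Fin m) : ℝ :=
  ((if a = c ∧ b = d then (1 : ℝ) else 0) + (if a = d ∧ b = c then (1 : ℝ) else 0)) / 2

/-- The symmetrized multi-index delta `δ^{(i₁}_{j₁} ⋯ δ^{i_k)}_{j_k}` for unordered
multi-indices `I`, `J`. -/
noncomputable def idxWt {m : ℕ} (I J : MIdx m) : ℝ :=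
  if I = J then
    (∏ s ∈ I.toFinset, (Nat.factorial (I.count s) : ℝ)) /
      (Nat.factorial (Multiset.card I) : ℝ)
  else 0

/-- The weighted partial derivative operator `∂^{ab,I}`, realized as the directional
derivative along the symmetrized coordinate direction determined by
`∂^{ab,I} g_{cd,J} = δ^a_{(c} δ^b_{d)} δ^{(i₁}_{j₁} ⋯ δ^{i_k)}_{j_k}`. -/
noncomputable def pd {m : ℕ} (a b : Fin m) (I : MIdx m) (F : Jet m → ℝ) : Jet m → ℝ :=
  fun z => deriv (fun t : ℝ =>
    F (z.1, fun c d J => z.2 c d J + t * (pairWt a b c d * idxWt I J))) 0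

/-- The partial derivative `∂/∂x^i` in a base coordinate. -/
noncomputable def xpd {m : ℕ} (i : Fin m) (F : Jet m → ℝ) : Jet m → ℝ :=
  fun z => deriv (fun t : ℝ => F (Function.update z.1 i (z.1 i + t), z.2)) 0

/-- The partial derivative `∂/∂x^i` of a function on the base `ℝ^m`. -/
noncomputable def vpd {m : ℕ} (i : Fin m) (f : (Fin m → ℝ) → ℝ) : (Fin m → ℝ) → ℝ :=
  fun x => deriv (fun t : ℝ => f (Function.update x i (x i + t))) 0

/-- The total derivative operator
`D_i = ∂/∂x^i + Σ_{|I| ≥ 0} g_{ab,Ii} ∂^{ab,I}`, the Einstein sum running over all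
ordered multi-indices `I` (lists) and all `a`, `b`. -/
noncomputable def Dt {m : ℕ} (i : Fin m) (F : Jet m → ℝ) : Jet m → ℝ :=
  fun z => xpd i F z +
    ∑' l : List (Fin m), ∑ a : Fin m, ∑ b : Fin m,
      z.2 a b ((l : MIdx m) + {i}) * pd a b (l : MIdx m) F z

/-- The iterated total derivative `D_I = D_{i₁} ⋯ D_{i_k}` along an ordered multi-index. -/
noncomputable def DtL {m : ℕ} (l : List (Fin m)) (F : Jet m → ℝ) : Jet m → ℝ :=
  l.foldr Dt F

/-- The higher Euler–Lagrange operators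
`E^{ab,I}(F) = Σ_{|J| ≥ 0} binom(|I|+|J|,|I|) (−D)_J (∂^{ab,IJ} F)`, the sum running over
all ordered multi-indices `J`. -/
noncomputable def hEL {m : ℕ} (a b : Fin m) (I : MIdx m) (F : Jet m → ℝ) : Jet m → ℝ :=
  fun z => ∑' J : List (Fin m),
    (Nat.choose (Multiset.card I + J.length) (Multiset.card I) : ℝ) * (-1 : ℝ) ^ J.length *
      DtL J (pd a b (I + (J : MIdx m)) F) z

/-- The Euler–Lagrange operator `E^{ab}(L) = Σ_{|I| ≥ 0} (−D)_I (∂^{ab,I} L)`. -/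
noncomputable def EL {m : ℕ} (a b : Fin m) (F : Jet m → ℝ) : Jet m → ℝ := hEL a b 0 F

/-- The Helmholtz components `H^{ab;cd,I} = ∂^{cd,I} T^{ab} − (−1)^{|I|} E^{ab,I}(T^{cd})`. -/
noncomputable def Helm {m : ℕ} (T : Fin m → Fin m → Jet m → ℝ) (a b c d : Fin m)
    (I : MIdx m) : Jet m → ℝ :=
  fun z => pd c d I (T a b) z - (-1 : ℝ) ^ (Multiset.card I) * hEL a b I (T c d) z

/-- Truncated jet coordinates of order ≤ k (derivative slots labelled by ordered tuples). -/
abbrev Trunc (m k : ℕ) :=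
  (Fin m → ℝ) × (Fin m → Fin m → (j : Fin (k + 1)) → ((Fin (j : ℕ) → Fin m) → ℝ))

/-- Projection from the jet space onto the truncated coordinates. -/
noncomputable def truncProj (m k : ℕ) (z : Jet m) : Trunc m k :=
  (z.1, fun a b _j p => z.2 a b ((List.ofFn p : List (Fin m)) : MIdx m))

/-- The nondegeneracy domain in the truncated coordinates. -/
def truncDom (m k : ℕ) : Set (Trunc m k) :=
  {w | (Matrix.of fun a b => w.2 a b ⟨0, Nat.succ_pos k⟩ (fun i => i.elim0)).det ≠ 0}

/-- `F` is a differential function of order `k`: on the domain where `det g ≠ 0` it is a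
smooth function of the variables `x^i` and `g_{ab,I}` with `|I| ≤ k` only. -/
def IsDF (m k : ℕ) (F : Jet m → ℝ) : Prop :=
  ∃ f : Trunc m k → ℝ, ContDiffOn ℝ (⊤ : ℕ∞) f (truncDom m k) ∧
    ∀ z, F z = f (truncProj m k z)

/-- A source form of order `k`: symmetric components `T^{ab} = T^{(ab)}`, each a
differential function of order `k`. -/
structure SourceForm (m k : ℕ) where
  T : Fin m → Fin m → Jet m → ℝ
  symm : ∀ a b, T a b = T b a
  order : ∀ a b, IsDF m k (T a b)

/-- The inverse metric `g^{ab}`. -/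
noncomputable def ginv {m : ℕ} (z : Jet m) : Matrix (Fin m) (Fin m) ℝ := (gMat z)⁻¹

/-- The Christoffel symbols `Γ^a_{bc} = ½ g^{ad}(g_{db,c} + g_{dc,b} − g_{bc,d})`. -/
noncomputable def Gamma {m : ℕ} (a b c : Fin m) (z : Jet m) : ℝ :=
  (1 / 2) * ∑ d, ginv z a d * (z.2 d b {c} + z.2 d c {b} - z.2 b c {d})

/-- `T` is divergence-free: `D_b T^{ab} + Γ^a_{bc} T^{bc} = 0` identically. -/
def DivFree {m k : ℕ} (S : SourceForm m k) : Prop :=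
  ∀ a, ∀ z ∈ JetDom m,
    (∑ b, Dt b (S.T a b) z) + (∑ b, ∑ c, Gamma a b c z * S.T b c z) = 0

/-- Evolutionary components `X_{ev,ab} = Q_{ab} − P^c g_{ab,c}` of a projectable
vector field `X = P^i ∂/∂x^i + Q_{ab} ∂^{ab}`. -/
noncomputable def Xev {m : ℕ} (P : Fin m → (Fin m → ℝ) → ℝ) (Q : Fin m → Fin m → Jet m → ℝ)
    (a b : Fin m) : Jet m → ℝ :=
  fun z => Q a b z - ∑ c, P c z.1 * z.2 a b {c}

/-- The prolongation `pr X = P^i D_i + Σ_{|I| ≥ 0} D_I(X_{ev,ab}) ∂^{ab,I}` of a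
projectable vector field, acting on differential functions. -/
noncomputable def prX {m : ℕ} (P : Fin m → (Fin m → ℝ) → ℝ) (Q : Fin m → Fin m → Jet m → ℝ)
    (F : Jet m → ℝ) : Jet m → ℝ :=
  fun z => (∑ i, P i z.1 * Dt i F z) +
    ∑' l : List (Fin m), ∑ a, ∑ b, DtL l (Xev P Q a b) z * pd a b (l : MIdx m) F z

/-- The components of the Lie derivative of a source form along the prolongation of a
projectable vector field:
`(ℒ_X T)^{ab} = pr X(T^{ab}) + T^{cd} ∂^{ab,∅} Q_{cd} + (∂P^j/∂x^j) T^{ab}`. -/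
noncomputable def LieT {m : ℕ} (P : Fin m → (Fin m → ℝ) → ℝ) (Q : Fin m → Fin m → Jet m → ℝ)
    (T : Fin m → Fin m → Jet m → ℝ) (a b : Fin m) : Jet m → ℝ :=
  fun z => prX P Q (T a b) z + (∑ c, ∑ d, T c d z * pd a b 0 (Q c d) z)
    + (∑ j, vpd j (P j) z.1) * T a b z

/-- The `∂^{ab}`-components `Q_{ab} = −2 ξ^c_{,(a} g_{b)c}` of the lift `X_ξ` of a vector
field `ξ` on `ℝ^m` to the bundle of metrics. -/
noncomputable def liftQ {m : ℕ} (ξ : Fin m → (Fin m → ℝ) → ℝ) (a b : Fin m) : Jet m → ℝ :=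
  fun z => -∑ c, (vpd a (ξ c) z.1 * z.2 b c 0 + vpd b (ξ c) z.1 * z.2 a c 0)

/-- `T` is natural: `pr X_ξ(T^{ab}) − 2 ξ^{(a}_{,c} T^{b)c} + ξ^c_{,c} T^{ab} = 0`
identically, for every smooth vector field `ξ` on `ℝ^m`. -/
def Natural {m k : ℕ} (S : SourceForm m k) : Prop :=
  ∀ ξ : Fin m → (Fin m → ℝ) → ℝ, (∀ c, ContDiff ℝ (⊤ : ℕ∞) (ξ c)) →
    ∀ a b, ∀ z ∈ JetDom m,
      prX ξ (liftQ ξ) (S.T a b) z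
        - ((∑ c, vpd c (ξ a) z.1 * S.T b c z) + (∑ c, vpd c (ξ b) z.1 * S.T a c z))
        + (∑ c, vpd c (ξ c) z.1) * S.T a b z = 0

/-- `T` admits translational conservation laws: `E^{hk}(g_{ab,p} T^{ab}) = 0` identically. -/
def TranslCL {m k : ℕ} (S : SourceForm m k) : Prop :=
  ∀ p h k', ∀ z ∈ JetDom m,
    EL h k' (fun w => ∑ a, ∑ b, w.2 a b {p} * S.T a b w) z = 0

/-- `T` is locally variational: all Helmholtz components vanish identically. -/
def LocallyVariational {m k : ℕ} (S : SourceForm m k) : Prop :=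
  ∀ a b c d (I : MIdx m), ∀ z ∈ JetDom m, Helm S.T a b c d I z = 0

/-- `F` has no explicit dependence on the base coordinates `x^i`. -/
def NoExplicitX {m : ℕ} (F : Jet m → ℝ) : Prop :=
  ∀ x x' g, F (x, g) = F (x', g)



/-! ### Auxiliary machinery -/

section Aux
variable {m : ℕ}


/-- Lists of length exactly `n`. -/
def listsLen (m : ℕ) : ℕ → Finset (List (Fin m))
  | 0 => {[]}
  | n+1 => (Finset.univ ×ˢ listsLen m n).image fun p => p.1 :: p.2

lemma mem_listsLen {n : ℕ} {l : List (Fin m)} : l ∈ listsLen m n ↔ l.length = n := by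
  induction n generalizing l with
  | zero => simp [listsLen, List.length_eq_zero_iff]
  | succ n ih =>
    cases l with
    | nil => simp [listsLen]
    | cons a l =>
      simp only [listsLen, Finset.mem_image, Finset.mem_product, Finset.mem_univ, true_and,
        Prod.exists, List.length_cons, Nat.succ_inj]
      constructor
      · rintro ⟨x, y, hy, hxy⟩
        obtain ⟨rfl, rfl⟩ : x = a ∧ y = l := by simpa using hxy
        exact ih.1 hy
      · intro h; exact ⟨a, l, ih.2 h, rfl⟩

def listsLe (m K : ℕ) : Finset (List (Fin m)) := (Finset.range (K+1)).biUnion (listsLen m)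

lemma mem_listsLe {K : ℕ} {l : List (Fin m)} : l ∈ listsLe m K ↔ l.length ≤ K := by
  simp only [listsLe, Finset.mem_biUnion, Finset.mem_range, mem_listsLen, Nat.lt_succ_iff]
  constructor
  · rintro ⟨i, hi, rfl⟩; exact hi
  · intro h; exact ⟨l.length, h, rfl⟩

lemma summable_of_len_le {K : ℕ} {f : List (Fin m) → ℝ}
    (h : ∀ l : List (Fin m), K < l.length → f l = 0) : Summable f :=
  summable_of_ne_finset_zero (s := listsLe m K) fun l hl =>
    h l (by simpa [mem_listsLe, not_le] using hl)

lemma sum_listsLen_succ {n : ℕ} (f : List (Fin m) → ℝ) :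
    ∑ l ∈ listsLen m (n+1), f l = ∑ i : Fin m, ∑ l ∈ listsLen m n, f (i :: l) := by
  rw [listsLen, Finset.sum_image, Finset.sum_product]
  rintro ⟨a, l⟩ - ⟨a', l'⟩ - h
  simpa using h

lemma sum_listsLen_zero (f : List (Fin m) → ℝ) : ∑ l ∈ listsLen m 0, f l = f [] := by
  simp [listsLen]

lemma tsum_list_eq {K : ℕ} (f : List (Fin m) → ℝ)
    (h : ∀ l : List (Fin m), K < l.length → f l = 0) :
    ∑' l : List (Fin m), f l = ∑ n ∈ Finset.range (K+1), ∑ l ∈ listsLen m n, f l := by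
  rw [tsum_eq_sum (s := listsLe m K) (fun l hl => h l (by simpa [mem_listsLe, not_le] using hl)),
    listsLe, Finset.sum_biUnion]
  intro i hi j hj hij
  simp only [Function.onFun, Finset.disjoint_left]
  intro l hl hl'
  exact hij (by rw [← mem_listsLen.1 hl, mem_listsLen.1 hl'])



/-! #### Domains and directions -/

/-- The nondegeneracy domain in jet space. -/
def Uset (m : ℕ) : Set (Jet m) := {z | (gMat z).det ≠ 0}

lemma mem_Uset {z : Jet m} : z ∈ Uset m ↔ (gMat z).det ≠ 0 := Iff.rfl

lemma JetDom_subset_Uset : JetDom m ⊆ Uset m := fun _ hz => hz.2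

/-- Direction in jet space for `∂/∂x^i`. -/
noncomputable def xdir (m : ℕ) (i : Fin m) : Jet m := (fun j => if j = i then 1 else 0, 0)

/-- Direction in jet space for `∂^{ab,I}`. -/
noncomputable def gdir (m : ℕ) (a b : Fin m) (I : MIdx m) : Jet m :=
  (0, fun c d J => pairWt a b c d * idxWt I J)

lemma xpd_eq (i : Fin m) (F : Jet m → ℝ) (z : Jet m) :
    xpd i F z = deriv (fun t : ℝ => F (z + t • xdir m i)) 0 := by
  unfold xpd
  congr 1
  funext t
  congr 1
  refine Prod.ext ?_ ?_
  · funext j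
    simp only [Function.update, xdir, Pi.add_apply, Pi.smul_apply, smul_eq_mul]
    by_cases h : j = i
    · subst h; simp
    · simp [h]
  · show z.2 = z.2 + t • (0 : Fin m → Fin m → MIdx m → ℝ)
    simp

lemma pd_eq (a b : Fin m) (I : MIdx m) (F : Jet m → ℝ) (z : Jet m) :
    pd a b I F z = deriv (fun t : ℝ => F (z + t • gdir m a b I)) 0 := by
  unfold pd
  congr 1
  funext t
  congr 1
  refine Prod.ext ?_ ?_
  · show z.1 = z.1 + t • (0 : Fin m → ℝ)
    simp
  · rfl

/-! #### Properties of the truncation -/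

lemma truncProj_add {k : ℕ} (z w : Jet m) :
    truncProj m k (z + w) = truncProj m k z + truncProj m k w := rfl

lemma truncProj_smul {k : ℕ} (t : ℝ) (z : Jet m) :
    truncProj m k (t • z) = t • truncProj m k z := rfl

lemma gMat_truncProj {k : ℕ} (z : Jet m) :
    (Matrix.of fun a b => (truncProj m k z).2 a b ⟨0, Nat.succ_pos k⟩ (fun i => i.elim0)) =
      gMat z := by
  ext a b
  show z.2 a b _ = z.2 a b 0
  congr 1

lemma truncProj_mem_truncDom {k : ℕ} {z : Jet m} :
    truncProj m k z ∈ truncDom m k ↔ z ∈ Uset m := by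
  unfold truncDom Uset
  rw [Set.mem_setOf_eq, Set.mem_setOf_eq, gMat_truncProj]

lemma isOpen_truncDom {k : ℕ} : IsOpen (truncDom m k) := by
  have hcont : Continuous fun w : Trunc m k =>
      (Matrix.of fun a b => w.2 a b ⟨0, Nat.succ_pos k⟩ (fun i => i.elim0)).det := by
    apply Continuous.matrix_det
    refine continuous_matrix fun a b => ?_
    show Continuous fun w : Trunc m k => w.2 a b ⟨0, Nat.succ_pos k⟩ (fun i => i.elim0)
    exact (continuous_apply _).comp ((continuous_apply _).comp
      ((continuous_apply b).comp ((continuous_apply a).comp continuous_snd)))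
  exact isOpen_compl_singleton.preimage hcont


/-! #### Restriction between truncation orders -/

/-- Restriction of truncated coordinates to a lower order. -/
def truncRes (m k : ℕ) (w : Trunc m (k+1)) : Trunc m k :=
  (w.1, fun a b j p => w.2 a b ⟨(j : ℕ), Nat.lt_succ_of_lt j.isLt⟩ p)

lemma truncRes_truncProj {k : ℕ} (z : Jet m) :
    truncRes m k (truncProj m (k+1) z) = truncProj m k z := rfl

/-- `truncRes` as a linear map. -/
def truncResL (m k : ℕ) : Trunc m (k+1) →ₗ[ℝ] Trunc m k where
  toFun := truncRes m k
  map_add' _ _ := rfl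
  map_smul' _ _ := rfl

lemma contDiff_truncRes {k : ℕ} : ContDiff ℝ (⊤ : ℕ∞) (truncRes m k) :=
  (LinearMap.toContinuousLinearMap (truncResL m k)).contDiff

lemma truncRes_mapsTo {k : ℕ} :
    Set.MapsTo (truncRes m k) (truncDom m (k+1)) (truncDom m k) := fun w hw => hw

lemma IsDF.up {k : ℕ} {F : Jet m → ℝ} (h : IsDF m k F) : IsDF m (k+1) F := by
  obtain ⟨f, hf, he⟩ := h
  refine ⟨f ∘ truncRes m k, hf.comp contDiff_truncRes.contDiffOn truncRes_mapsTo, fun z => ?_⟩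
  show F z = f (truncRes m k (truncProj m (k+1) z))
  rw [truncRes_truncProj]
  exact he z

lemma IsDF.mono {k K : ℕ} (hkK : k ≤ K) {F : Jet m → ℝ} (h : IsDF m k F) : IsDF m K F := by
  induction K, hkK using Nat.le_induction with
  | base => exact h
  | succ n hn ih => exact ih.up

/-! #### IsDF is closed under directional derivatives -/

lemma IsDF.dirDeriv {k : ℕ} {F : Jet m → ℝ} (h : IsDF m k F) (v : Jet m) :
    IsDF m k (fun z => deriv (fun t : ℝ => F (z + t • v)) 0) := by
  obtain ⟨f, hf, he⟩ := h
  set V := truncProj m k v with hV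
  have hopen : IsOpen (truncDom m k) := isOpen_truncDom
  have hline : ∀ w : Trunc m k, w ∈ truncDom m k →
      HasDerivAt (fun t : ℝ => f (w + t • V)) (fderiv ℝ f w V) 0 := by
    intro w hw
    have hdiff : DifferentiableAt ℝ f w :=
      (hf.contDiffAt (hopen.mem_nhds hw)).differentiableAt (by simp)
    have hc : HasDerivAt (fun t : ℝ => w + t • V) V 0 := by
      simpa using ((hasDerivAt_id (0 : ℝ)).smul_const V).const_add w
    have h0 : w + (0 : ℝ) • V = w := by simp
    have := HasFDerivAt.comp_hasDerivAt (l := f) 0 (h0 ▸ hdiff.hasFDerivAt) hc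
    simpa [Function.comp_def] using this
  refine ⟨fun w => deriv (fun t : ℝ => f (w + t • V)) 0, ?_, fun z => ?_⟩
  · have hbase : ContDiffOn ℝ (⊤ : ℕ∞) (fun w => fderiv ℝ f w V) (truncDom m k) := by
      have hfd : ContDiffOn ℝ (⊤ : ℕ∞) (fderiv ℝ f) (truncDom m k) :=
        hf.fderiv_of_isOpen hopen (by exact_mod_cast le_top)
      exact (ContinuousLinearMap.apply ℝ ℝ V).contDiff.comp_contDiffOn hfd
    exact hbase.congr fun w hw => (hline w hw).deriv
  · have harg : ∀ t : ℝ, F (z + t • v) = f (truncProj m k z + t • V) := by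
      intro t
      rw [he, truncProj_add, truncProj_smul]
    simp only [harg]

lemma IsDF.pdDF {k : ℕ} {F : Jet m → ℝ} (h : IsDF m k F) (a b : Fin m) (I : MIdx m) :
    IsDF m k (pd a b I F) := by
  have h2 := h.dirDeriv (gdir m a b I)
  have : pd a b I F = fun z => deriv (fun t : ℝ => F (z + t • gdir m a b I)) 0 :=
    funext fun z => pd_eq a b I F z
  rw [this]
  exact h2

lemma IsDF.xpdDF {k : ℕ} {F : Jet m → ℝ} (h : IsDF m k F) (i : Fin m) :
    IsDF m k (xpd i F) := by
  have h2 := h.dirDeriv (xdir m i)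
  have : xpd i F = fun z => deriv (fun t : ℝ => F (z + t • xdir m i)) 0 :=
    funext fun z => xpd_eq i F z
  rw [this]
  exact h2

/-! #### Vanishing of high-order partials -/

lemma truncProj_gdir {k : ℕ} {I : MIdx m} (hI : k < Multiset.card I) (a b : Fin m) :
    truncProj m k (gdir m a b I) = 0 := by
  refine Prod.ext rfl ?_
  funext c d j p
  show pairWt a b c d * idxWt I ((List.ofFn p : List (Fin m)) : MIdx m) = 0
  have hne : I ≠ ((List.ofFn p : List (Fin m)) : MIdx m) := by
    intro hy
    have := congrArg Multiset.card hy
    simp only [Multiset.coe_card, List.length_ofFn] at this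
    omega
  rw [idxWt, if_neg hne, mul_zero]

lemma IsDF.pd_zero {k : ℕ} {F : Jet m → ℝ} (h : IsDF m k F) {I : MIdx m}
    (hI : k < Multiset.card I) (a b : Fin m) : pd a b I F = fun _ => 0 := by
  obtain ⟨f, hf, he⟩ := h
  funext z
  rw [pd_eq]
  have harg : ∀ t : ℝ, F (z + t • gdir m a b I) = F z := by
    intro t
    rw [he, he, truncProj_add, truncProj_smul, truncProj_gdir hI, smul_zero, add_zero]
  simp only [harg]
  exact deriv_const 0 (F z)

/-! #### Differentiability along lines, and eventual membership -/

lemma IsDF.diffAt_line {k : ℕ} {F : Jet m → ℝ} (h : IsDF m k F) {z : Jet m}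
    (hz : z ∈ Uset m) (v : Jet m) :
    DifferentiableAt ℝ (fun t : ℝ => F (z + t • v)) 0 := by
  obtain ⟨f, hf, he⟩ := h
  have harg : (fun t : ℝ => F (z + t • v)) =
      fun t : ℝ => f (truncProj m k z + t • truncProj m k v) := by
    funext t
    rw [he, truncProj_add, truncProj_smul]
  rw [harg]
  have hw : truncProj m k z ∈ truncDom m k := truncProj_mem_truncDom.2 hz
  have hdiff : DifferentiableAt ℝ f (truncProj m k z) :=
    (hf.contDiffAt (isOpen_truncDom.mem_nhds hw)).differentiableAt (by simp)
  have hc : DifferentiableAt ℝ (fun t : ℝ => truncProj m k z + t • truncProj m k v) 0 :=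
    (((hasDerivAt_id (0 : ℝ)).smul_const (truncProj m k v)).const_add
      (truncProj m k z)).differentiableAt
  have h0 : truncProj m k z + (0 : ℝ) • truncProj m k v = truncProj m k z := by simp
  exact (h0 ▸ hdiff).comp 0 hc

lemma eventually_line_mem {z : Jet m} (hz : z ∈ Uset m) (v : Jet m) :
    ∀ᶠ t in nhds (0 : ℝ), z + t • v ∈ Uset m := by
  have hc : Continuous fun t : ℝ => (gMat (z + t • v)).det := by
    apply Continuous.matrix_det
    refine continuous_matrix fun a b => ?_
    show Continuous fun t : ℝ => z.2 a b 0 + t * v.2 a b 0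
    fun_prop
  have h0 : z + (0 : ℝ) • v = z := by simp
  have hne : (gMat (z + (0 : ℝ) • v)).det ≠ 0 := by rw [h0]; exact hz
  have := hc.continuousAt.eventually_ne (y := 0) (by rw [h0] at hne ⊢; simpa [h0, Uset] using hz)
  exact this


/-! #### Congruence on the nondegenerate domain -/

lemma pd_congr {F G : Jet m → ℝ} (h : ∀ w ∈ Uset m, F w = G w) {z : Jet m}
    (hz : z ∈ Uset m) (a b : Fin m) (I : MIdx m) : pd a b I F z = pd a b I G z := by
  rw [pd_eq, pd_eq]
  exact Filter.EventuallyEq.deriv_eq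
    ((eventually_line_mem hz (gdir m a b I)).mono fun t ht => h _ ht)

lemma xpd_congr {F G : Jet m → ℝ} (h : ∀ w ∈ Uset m, F w = G w) {z : Jet m}
    (hz : z ∈ Uset m) (i : Fin m) : xpd i F z = xpd i G z := by
  rw [xpd_eq, xpd_eq]
  exact Filter.EventuallyEq.deriv_eq
    ((eventually_line_mem hz (xdir m i)).mono fun t ht => h _ ht)

lemma Dt_congr {F G : Jet m → ℝ} (h : ∀ w ∈ Uset m, F w = G w) {z : Jet m}
    (hz : z ∈ Uset m) (i : Fin m) : Dt i F z = Dt i G z := by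
  unfold Dt
  rw [xpd_congr h hz]
  congr 1
  refine tsum_congr fun l => Finset.sum_congr rfl fun a _ => Finset.sum_congr rfl fun b _ => ?_
  rw [pd_congr h hz]

/-! #### Linearity -/

lemma pd_add {k K : ℕ} {F G : Jet m → ℝ} (hF : IsDF m k F) (hG : IsDF m K G) {z : Jet m}
    (hz : z ∈ Uset m) (a b : Fin m) (I : MIdx m) :
    pd a b I (fun w => F w + G w) z = pd a b I F z + pd a b I G z := by
  rw [pd_eq, pd_eq, pd_eq]
  exact deriv_add (hF.diffAt_line hz _) (hG.diffAt_line hz _)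

lemma xpd_add {k K : ℕ} {F G : Jet m → ℝ} (hF : IsDF m k F) (hG : IsDF m K G) {z : Jet m}
    (hz : z ∈ Uset m) (i : Fin m) :
    xpd i (fun w => F w + G w) z = xpd i F z + xpd i G z := by
  rw [xpd_eq, xpd_eq, xpd_eq]
  exact deriv_add (hF.diffAt_line hz _) (hG.diffAt_line hz _)

lemma pd_const_mul {k : ℕ} {F : Jet m → ℝ} (hF : IsDF m k F) (c : ℝ) {z : Jet m}
    (hz : z ∈ Uset m) (a b : Fin m) (I : MIdx m) :
    pd a b I (fun w => c * F w) z = c * pd a b I F z := by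
  rw [pd_eq, pd_eq]
  exact deriv_const_mul c (hF.diffAt_line hz _)

lemma xpd_const_mul {k : ℕ} {F : Jet m → ℝ} (hF : IsDF m k F) (c : ℝ) {z : Jet m}
    (hz : z ∈ Uset m) (i : Fin m) :
    xpd i (fun w => c * F w) z = c * xpd i F z := by
  rw [xpd_eq, xpd_eq]
  exact deriv_const_mul c (hF.diffAt_line hz _)

lemma pd_zero_fun (a b : Fin m) (I : MIdx m) : pd a b I (fun _ => (0 : ℝ)) = fun _ => 0 := by
  funext z
  rw [pd_eq]
  exact deriv_const 0 0

lemma xpd_zero_fun (i : Fin m) : xpd i (fun _ => (0 : ℝ)) = fun _ => 0 := by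
  funext z
  rw [xpd_eq]
  exact deriv_const 0 0

lemma Dt_zero_fun (i : Fin m) : Dt i (fun _ => (0 : ℝ)) = fun _ => 0 := by
  funext z
  unfold Dt
  have h1 : ∀ l : List (Fin m), (∑ a : Fin m, ∑ b : Fin m,
      z.2 a b ((l : MIdx m) + {i}) * pd a b (l : MIdx m) (fun _ => (0:ℝ)) z) = 0 := by
    intro l
    refine Finset.sum_eq_zero fun a _ => Finset.sum_eq_zero fun b _ => ?_
    rw [pd_zero_fun]
    simp
  rw [xpd_zero_fun, tsum_congr h1]
  simp

lemma DtL_zero_fun (l : List (Fin m)) : DtL l (fun _ => (0 : ℝ)) = fun _ => 0 := by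
  induction l with
  | nil => rfl
  | cons i l ih =>
    show Dt i (DtL l fun _ => (0:ℝ)) = fun _ => 0
    rw [ih, Dt_zero_fun]

/-- Summability of the Einstein sum in `Dt` for a differential function. -/
lemma summable_Dt {k : ℕ} {F : Jet m → ℝ} (hF : IsDF m k F) (i : Fin m) (z : Jet m) :
    Summable fun l : List (Fin m) =>
      ∑ a : Fin m, ∑ b : Fin m, z.2 a b ((l : MIdx m) + {i}) * pd a b (l : MIdx m) F z := by
  refine summable_of_len_le (K := k) fun l hl => ?_
  have hpd := hF.pd_zero (I := (l : MIdx m)) (by simpa using hl)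
  refine Finset.sum_eq_zero fun a _ => Finset.sum_eq_zero fun b _ => ?_
  rw [hpd a b]
  simp

lemma Dt_add {k K : ℕ} {F G : Jet m → ℝ} (hF : IsDF m k F) (hG : IsDF m K G) {z : Jet m}
    (hz : z ∈ Uset m) (i : Fin m) :
    Dt i (fun w => F w + G w) z = Dt i F z + Dt i G z := by
  unfold Dt
  rw [xpd_add hF hG hz]
  have hterm : ∀ l : List (Fin m),
      (∑ a : Fin m, ∑ b : Fin m, z.2 a b ((l : MIdx m) + {i}) *
        pd a b (l : MIdx m) (fun w => F w + G w) z)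
      = (∑ a : Fin m, ∑ b : Fin m, z.2 a b ((l : MIdx m) + {i}) * pd a b (l : MIdx m) F z)
        + (∑ a : Fin m, ∑ b : Fin m, z.2 a b ((l : MIdx m) + {i}) * pd a b (l : MIdx m) G z) := by
    intro l
    rw [← Finset.sum_add_distrib]
    refine Finset.sum_congr rfl fun a _ => ?_
    rw [← Finset.sum_add_distrib]
    refine Finset.sum_congr rfl fun b _ => ?_
    rw [pd_add hF hG hz, mul_add]
  calc xpd i F z + xpd i G z + ∑' l : List (Fin m), ∑ a : Fin m, ∑ b : Fin m,
        z.2 a b ((l : MIdx m) + {i}) * pd a b (l : MIdx m) (fun w => F w + G w) z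
      = xpd i F z + xpd i G z + ((∑' l : List (Fin m), ∑ a : Fin m, ∑ b : Fin m,
          z.2 a b ((l : MIdx m) + {i}) * pd a b (l : MIdx m) F z)
        + ∑' l : List (Fin m), ∑ a : Fin m, ∑ b : Fin m,
          z.2 a b ((l : MIdx m) + {i}) * pd a b (l : MIdx m) G z) := by
        rw [tsum_congr hterm, Summable.tsum_add (summable_Dt hF i z) (summable_Dt hG i z)]
    _ = _ := by ring

lemma Dt_const_mul {k : ℕ} {F : Jet m → ℝ} (hF : IsDF m k F) (c : ℝ) {z : Jet m}
    (hz : z ∈ Uset m) (i : Fin m) :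
    Dt i (fun w => c * F w) z = c * Dt i F z := by
  unfold Dt
  rw [xpd_const_mul hF c hz]
  have hterm : ∀ l : List (Fin m),
      (∑ a : Fin m, ∑ b : Fin m, z.2 a b ((l : MIdx m) + {i}) *
        pd a b (l : MIdx m) (fun w => c * F w) z)
      = c * ∑ a : Fin m, ∑ b : Fin m, z.2 a b ((l : MIdx m) + {i}) * pd a b (l : MIdx m) F z := by
    intro l
    rw [Finset.mul_sum]
    refine Finset.sum_congr rfl fun a _ => ?_
    rw [Finset.mul_sum]
    refine Finset.sum_congr rfl fun b _ => ?_
    rw [pd_const_mul hF c hz]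
    ring
  rw [tsum_congr hterm, tsum_mul_left]
  ring

/-! #### IsDF closure under algebraic operations -/

lemma IsDF.add {k : ℕ} {F G : Jet m → ℝ} (hF : IsDF m k F) (hG : IsDF m k G) :
    IsDF m k (fun z => F z + G z) := by
  obtain ⟨f, hf, hef⟩ := hF
  obtain ⟨g, hg, heg⟩ := hG
  exact ⟨fun w => f w + g w, hf.add hg, fun z => by simp only []; rw [hef, heg]⟩

lemma IsDF.const_mul {k : ℕ} {F : Jet m → ℝ} (hF : IsDF m k F) (c : ℝ) :
    IsDF m k (fun z => c * F z) := by
  obtain ⟨f, hf, hef⟩ := hF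
  exact ⟨fun w => c * f w, contDiffOn_const.mul hf, fun z => by simp only []; rw [hef]⟩

lemma IsDF.zero {k : ℕ} : IsDF m k (fun _ => (0 : ℝ)) :=
  ⟨fun _ => 0, contDiffOn_const, fun _ => rfl⟩

lemma IsDF.sum {k : ℕ} {ι : Type*} {s : Finset ι} {F : ι → Jet m → ℝ}
    (h : ∀ j ∈ s, IsDF m k (F j)) : IsDF m k (fun z => ∑ j ∈ s, F j z) := by
  classical
  induction s using Finset.induction with
  | empty => simpa using IsDF.zero
  | insert a s hj ih =>
    simp only [Finset.sum_insert hj]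
    exact (h a (Finset.mem_insert_self a s)).add
      (ih fun j hjs => h j (Finset.mem_insert_of_mem hjs))

lemma Dt_sum {k : ℕ} {ι : Type*} (s : Finset ι) {F : ι → Jet m → ℝ}
    (h : ∀ j ∈ s, IsDF m k (F j)) {z : Jet m} (hz : z ∈ Uset m) (i : Fin m) :
    Dt i (fun w => ∑ j ∈ s, F j w) z = ∑ j ∈ s, Dt i (F j) z := by
  classical
  induction s using Finset.induction with
  | empty =>
    simp only [Finset.sum_empty]
    rw [Dt_zero_fun]
  | insert a s hj ih =>
    simp only [Finset.sum_insert hj]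
    rw [Dt_add (h a (Finset.mem_insert_self a s))
      (IsDF.sum fun j hjs => h j (Finset.mem_insert_of_mem hjs)) hz,
      ih fun j hjs => h j (Finset.mem_insert_of_mem hjs)]

lemma Dt_sub {k K : ℕ} {F G : Jet m → ℝ} (hF : IsDF m k F) (hG : IsDF m K G) {z : Jet m}
    (hz : z ∈ Uset m) (i : Fin m) :
    Dt i (fun w => F w - G w) z = Dt i F z - Dt i G z := by
  have h1 : (fun w => F w - G w) = fun w => F w + (-1 : ℝ) * G w := by funext w; ring
  rw [h1, Dt_add hF (hG.const_mul (-1)) hz, Dt_const_mul hG (-1) hz]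
  ring


/-! #### `Dt` preserves differential functions (raising the order by one) -/

/-- The tuple underlying a list of known length. -/
def tupOf {n : ℕ} (l : List (Fin m)) (h : l.length = n) : Fin n → Fin m :=
  fun q => l.get (Fin.cast h.symm q)

lemma ofFn_tupOf {n : ℕ} (l : List (Fin m)) (h : l.length = n) :
    List.ofFn (tupOf l h) = l := by
  subst h
  show List.ofFn (fun q => l.get (Fin.cast rfl q)) = l
  rw [Fin.cast_refl]
  exact List.ofFn_get l

lemma contDiff_coord {k : ℕ} (a b : Fin m) (j : Fin (k+1)) (p : Fin (j : ℕ) → Fin m) :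
    ContDiff ℝ (⊤ : ℕ∞) (fun w : Trunc m k => w.2 a b j p) :=
  (LinearMap.toContinuousLinearMap
    (⟨⟨fun w : Trunc m k => w.2 a b j p, fun _ _ => rfl⟩, fun _ _ => rfl⟩ :
      Trunc m k →ₗ[ℝ] ℝ)).contDiff

lemma IsDF.DtDF {k : ℕ} {F : Jet m → ℝ} (h : IsDF m k F) (i : Fin m) :
    IsDF m (k+1) (Dt i F) := by
  classical
  obtain ⟨fx, hfx, hex⟩ := h.xpdDF i
  have hp : ∀ (a b : Fin m) (l : List (Fin m)), ∃ g : Trunc m k → ℝ,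
      ContDiffOn ℝ (⊤ : ℕ∞) g (truncDom m k) ∧
      ∀ z, pd a b (l : MIdx m) F z = g (truncProj m k z) :=
    fun a b l => h.pdDF a b (l : MIdx m)
  choose gg hgg hegg using hp
  refine ⟨fun w => fx (truncRes m k w) + ∑ n : Fin (k+1),
      ∑ l ∈ (listsLen m (n : ℕ)).attach, ∑ a : Fin m, ∑ b : Fin m,
      w.2 a b ⟨(n : ℕ)+1, Nat.succ_lt_succ n.isLt⟩
        (tupOf (l.1 ++ [i]) (by simp [mem_listsLen.1 l.2])) *
        gg a b l.1 (truncRes m k w), ?_, ?_⟩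
  · refine ContDiffOn.add
      (hfx.comp contDiff_truncRes.contDiffOn truncRes_mapsTo) ?_
    refine ContDiffOn.sum fun n _ => ContDiffOn.sum fun l _ => ContDiffOn.sum fun a _ =>
      ContDiffOn.sum fun b _ => ContDiffOn.mul ?_ ?_
    · exact (contDiff_coord a b _ _).contDiffOn
    · exact (hgg a b l.1).comp contDiff_truncRes.contDiffOn truncRes_mapsTo
  · intro z
    unfold Dt
    have hvanish : ∀ l : List (Fin m), k < l.length →
        (∑ a : Fin m, ∑ b : Fin m,
          z.2 a b ((l : MIdx m) + {i}) * pd a b (l : MIdx m) F z) = 0 := by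
      intro l hl
      refine Finset.sum_eq_zero fun a _ => Finset.sum_eq_zero fun b _ => ?_
      rw [h.pd_zero (by simpa using hl) a b]
      simp
    rw [tsum_list_eq _ hvanish, ← Fin.sum_univ_eq_sum_range
      (fun n => ∑ l ∈ listsLen m n, ∑ a : Fin m, ∑ b : Fin m,
        z.2 a b ((l : MIdx m) + {i}) * pd a b (l : MIdx m) F z) (k+1)]
    congr 1
    · rw [hex z, truncRes_truncProj]
    · refine Finset.sum_congr rfl fun n _ => ?_
      rw [← Finset.sum_attach (listsLen m (n : ℕ))
        (fun l => ∑ a : Fin m, ∑ b : Fin m,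
          z.2 a b ((l : MIdx m) + {i}) * pd a b (l : MIdx m) F z)]
      refine Finset.sum_congr rfl fun l _ => Finset.sum_congr rfl fun a _ =>
        Finset.sum_congr rfl fun b _ => ?_
      rw [hegg a b l.1 z, truncRes_truncProj]
      congr 1
      show z.2 a b ((l.1 : MIdx m) + {i}) = z.2 a b ((List.ofFn (tupOf (l.1 ++ [i]) _)
        : List (Fin m)) : MIdx m)
      rw [ofFn_tupOf]
      congr 1


/-! #### Expansion of the higher Euler operators, third order -/

lemma coe_pair (j k : Fin m) : (([j, k] : List (Fin m)) : MIdx m) = {j} + {k} := rfl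

lemma coe_triple (j k l : Fin m) :
    (([j, k, l] : List (Fin m)) : MIdx m) = {j} + {k} + {l} := rfl

lemma hEL_card3 {F : Jet m → ℝ} (hF : IsDF m 3 F) {I : MIdx m}
    (hI : Multiset.card I = 3) (a b : Fin m) : hEL a b I F = pd a b I F := by
  funext z
  unfold hEL
  rw [tsum_eq_single ([] : List (Fin m)) ?_]
  · simp [DtL, hI]
  · intro J hJ
    have hlen : 0 < J.length := List.length_pos_iff.2 hJ
    have h4 : 3 < Multiset.card (I + (J : MIdx m)) := by
      simp only [Multiset.card_add, hI, Multiset.coe_card]; omega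
    rw [hF.pd_zero h4 a b, DtL_zero_fun]
    simp

lemma hEL_card2 {F : Jet m → ℝ} (hF : IsDF m 3 F) {I : MIdx m}
    (hI : Multiset.card I = 2) (a b : Fin m) :
    hEL a b I F = fun z => pd a b I F z
      - 3 * ∑ j : Fin m, Dt j (pd a b (I + {j}) F) z := by
  funext z
  unfold hEL
  rw [tsum_list_eq (K := 1) _ ?_]
  · rw [Finset.sum_range_succ, Finset.sum_range_succ, Finset.sum_range_zero,
      sum_listsLen_zero, sum_listsLen_succ]
    simp only [sum_listsLen_zero]
    simp only [hI, List.length_nil, List.length_cons, Multiset.coe_nil, add_zero,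
      Multiset.coe_singleton, pow_zero, pow_one, Nat.add_zero, Nat.choose_self, DtL]
    norm_num [show Nat.choose 3 2 = 3 from rfl]
    simp only [← Finset.mul_sum]
    ring
  · intro J hJ
    have h4 : 3 < Multiset.card (I + (J : MIdx m)) := by
      simp only [Multiset.card_add, hI, Multiset.coe_card]; omega
    rw [hF.pd_zero h4 a b, DtL_zero_fun]
    simp

lemma hEL_card1 {F : Jet m → ℝ} (hF : IsDF m 3 F) {I : MIdx m}
    (hI : Multiset.card I = 1) (a b : Fin m) :
    hEL a b I F = fun z => pd a b I F z
      - 2 * (∑ j : Fin m, Dt j (pd a b (I + {j}) F) z)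
      + 3 * ∑ j : Fin m, ∑ k : Fin m, Dt j (Dt k (pd a b (I + {j} + {k}) F)) z := by
  funext z
  unfold hEL
  rw [tsum_list_eq (K := 2) _ ?_]
  · rw [Finset.sum_range_succ, Finset.sum_range_succ, Finset.sum_range_succ,
      Finset.sum_range_zero, sum_listsLen_zero, sum_listsLen_succ, sum_listsLen_succ]
    simp only [sum_listsLen_zero, sum_listsLen_succ]
    simp only [hI, List.length_nil, List.length_cons, Multiset.coe_nil, add_zero,
      Multiset.coe_singleton, coe_pair, pow_zero, pow_one, Nat.add_zero, Nat.choose_self, DtL,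
      List.foldr_cons, List.foldr_nil, ← add_assoc]
    norm_num [show Nat.choose 2 1 = 2 from rfl, show Nat.choose 3 1 = 3 from rfl]
    simp only [← Finset.mul_sum]
    ring
  · intro J hJ
    have h4 : 3 < Multiset.card (I + (J : MIdx m)) := by
      simp only [Multiset.card_add, hI, Multiset.coe_card]; omega
    rw [hF.pd_zero h4 a b, DtL_zero_fun]
    simp


lemma hEL_card0 {F : Jet m → ℝ} (hF : IsDF m 3 F) (a b : Fin m) :
    hEL a b (0 : MIdx m) F = fun z => pd a b 0 F z
      - (∑ j : Fin m, Dt j (pd a b {j} F) z)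
      + (∑ j : Fin m, ∑ k : Fin m, Dt j (Dt k (pd a b ({j} + {k}) F)) z)
      - ∑ j : Fin m, ∑ k : Fin m, ∑ l : Fin m,
          Dt j (Dt k (Dt l (pd a b ({j} + {k} + {l}) F))) z := by
  funext z
  unfold hEL
  rw [tsum_list_eq (K := 3) _ ?_]
  · rw [Finset.sum_range_succ, Finset.sum_range_succ, Finset.sum_range_succ,
      Finset.sum_range_succ, Finset.sum_range_zero, sum_listsLen_zero, sum_listsLen_succ,
      sum_listsLen_succ, sum_listsLen_succ]
    simp only [sum_listsLen_zero, sum_listsLen_succ]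
    simp only [Multiset.card_zero, List.length_nil, List.length_cons, Multiset.coe_nil,
      add_zero, zero_add, Multiset.coe_singleton, coe_pair, coe_triple, pow_zero, pow_one,
      Nat.add_zero, Nat.zero_add, Nat.choose_self, Nat.choose_zero_right, DtL,
      List.foldr_cons, List.foldr_nil]
    push_cast
    simp only [show ((-1:ℝ))^2 = 1 from by norm_num, show ((-1:ℝ))^3 = -1 from by norm_num,
      one_mul, neg_one_mul, Finset.sum_neg_distrib]
    ring
  · intro J hJ
    have h4 : 3 < Multiset.card ((0 : MIdx m) + (J : MIdx m)) := by
      simp only [Multiset.card_add, Multiset.card_zero, Multiset.coe_card]; omega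
    rw [hF.pd_zero h4 a b, DtL_zero_fun]
    simp

/-! #### Expansion of the Helmholtz components, third order -/

section HelmExp

variable {T : Fin m → Fin m → Jet m → ℝ} (hT : ∀ a b, IsDF m 3 (T a b))
include hT

lemma Helm_card3 {I : MIdx m} (hI : Multiset.card I = 3) (a b c d : Fin m) :
    Helm T a b c d I = fun z => pd c d I (T a b) z + pd a b I (T c d) z := by
  funext z
  unfold Helm
  rw [hEL_card3 (hT c d) hI, hI]
  norm_num

lemma Helm_card2 {I : MIdx m} (hI : Multiset.card I = 2) (a b c d : Fin m) :
    Helm T a b c d I = fun z => pd c d I (T a b) z - pd a b I (T c d) z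
      + 3 * ∑ j : Fin m, Dt j (pd a b (I + {j}) (T c d)) z := by
  funext z
  unfold Helm
  rw [hEL_card2 (hT c d) hI, hI]
  norm_num
  ring

lemma Helm_card1 {I : MIdx m} (hI : Multiset.card I = 1) (a b c d : Fin m) :
    Helm T a b c d I = fun z => pd c d I (T a b) z + pd a b I (T c d) z
      - 2 * (∑ j : Fin m, Dt j (pd a b (I + {j}) (T c d)) z)
      + 3 * ∑ j : Fin m, ∑ k : Fin m, Dt j (Dt k (pd a b (I + {j} + {k}) (T c d))) z := by
  funext z
  unfold Helm
  rw [hEL_card1 (hT c d) hI, hI]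
  norm_num
  ring

lemma Helm_card0 (a b c d : Fin m) :
    Helm T a b c d (0 : MIdx m) = fun z => pd c d 0 (T a b) z - pd a b 0 (T c d) z
      + (∑ j : Fin m, Dt j (pd a b {j} (T c d)) z)
      - (∑ j : Fin m, ∑ k : Fin m, Dt j (Dt k (pd a b ({j} + {k}) (T c d))) z)
      + ∑ j : Fin m, ∑ k : Fin m, ∑ l : Fin m,
          Dt j (Dt k (Dt l (pd a b ({j} + {k} + {l}) (T c d)))) z := by
  funext z
  unfold Helm
  rw [hEL_card0 (hT c d)]
  norm_num
  ring

end HelmExp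


lemma IsDF.sub {k : ℕ} {F G : Jet m → ℝ} (hF : IsDF m k F) (hG : IsDF m k G) :
    IsDF m k (fun z => F z - G z) := by
  have h1 : (fun z => F z - G z) = fun z => F z + (-1 : ℝ) * G z := by funext w; ring
  rw [h1]
  exact hF.add (hG.const_mul (-1))

/-! #### Pushing total derivatives through Helmholtz expansions -/

section Push

variable {T : Fin m → Fin m → Jet m → ℝ} (hT : ∀ a b, IsDF m 3 (T a b))
include hT

lemma Dt_push3 {K : MIdx m} (hK : Multiset.card K = 3) (a b c d : Fin m) {z : Jet m}
    (hz : z ∈ Uset m) (k : Fin m) :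
    Dt k (Helm T a b c d K) z
      = Dt k (pd c d K (T a b)) z + Dt k (pd a b K (T c d)) z := by
  rw [Helm_card3 hT hK a b c d]
  exact Dt_add ((hT a b).pdDF c d K) ((hT c d).pdDF a b K) hz k

lemma Dt_push33 {K : MIdx m} (hK : Multiset.card K = 3) (a b c d : Fin m) {z : Jet m}
    (hz : z ∈ Uset m) (j k : Fin m) :
    Dt j (Dt k (Helm T a b c d K)) z
      = Dt j (Dt k (pd c d K (T a b))) z + Dt j (Dt k (pd a b K (T c d))) z := by
  have h1 : ∀ w ∈ Uset m, Dt k (Helm T a b c d K) w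
      = Dt k (pd c d K (T a b)) w + Dt k (pd a b K (T c d)) w :=
    fun w hw => Dt_push3 hT hK a b c d hw k
  rw [Dt_congr h1 hz j]
  exact Dt_add (((hT a b).pdDF c d K).DtDF k) (((hT c d).pdDF a b K).DtDF k) hz j

lemma Dt_push333 {K : MIdx m} (hK : Multiset.card K = 3) (a b c d : Fin m) {z : Jet m}
    (hz : z ∈ Uset m) (i j k : Fin m) :
    Dt i (Dt j (Dt k (Helm T a b c d K))) z
      = Dt i (Dt j (Dt k (pd c d K (T a b)))) z
        + Dt i (Dt j (Dt k (pd a b K (T c d)))) z := by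
  have h1 : ∀ w ∈ Uset m, Dt j (Dt k (Helm T a b c d K)) w
      = Dt j (Dt k (pd c d K (T a b))) w + Dt j (Dt k (pd a b K (T c d))) w :=
    fun w hw => Dt_push33 hT hK a b c d hw j k
  rw [Dt_congr h1 hz i]
  exact Dt_add ((((hT a b).pdDF c d K).DtDF k).DtDF j)
    ((((hT c d).pdDF a b K).DtDF k).DtDF j) hz i

lemma Dt_push2 {K : MIdx m} (hK : Multiset.card K = 2) (a b c d : Fin m) {z : Jet m}
    (hz : z ∈ Uset m) (j : Fin m) :
    Dt j (Helm T a b c d K) z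
      = Dt j (pd c d K (T a b)) z - Dt j (pd a b K (T c d)) z
        + 3 * ∑ k : Fin m, Dt j (Dt k (pd a b (K + {k}) (T c d))) z := by
  rw [Helm_card2 hT hK a b c d]
  have hP1 : IsDF m 3 (pd c d K (T a b)) := (hT a b).pdDF c d K
  have hP2 : IsDF m 3 (pd a b K (T c d)) := (hT c d).pdDF a b K
  have hA : IsDF m 3 (fun w => pd c d K (T a b) w - pd a b K (T c d) w) := hP1.sub hP2
  have hBs : ∀ k ∈ (Finset.univ : Finset (Fin m)),
      IsDF m (3+1) (Dt k (pd a b (K + {k}) (T c d))) := by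
    intro k _
    have h1 : IsDF m 3 (pd a b (K + {k}) (T c d)) := (hT c d).pdDF a b (K + {k})
    exact h1.DtDF k
  have hBsum : IsDF m (3+1)
      (fun w => ∑ k : Fin m, Dt k (pd a b (K + {k}) (T c d)) w) := IsDF.sum hBs
  have hB : IsDF m (3+1)
      (fun w => 3 * ∑ k : Fin m, Dt k (pd a b (K + {k}) (T c d)) w) := hBsum.const_mul 3
  rw [Dt_add hA hB hz j, Dt_sub hP1 hP2 hz j,
    Dt_const_mul hBsum 3 hz j, Dt_sum Finset.univ hBs hz j]

lemma Dt_push22 {K : MIdx m} (hK : Multiset.card K = 2) (a b c d : Fin m) {z : Jet m}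
    (hz : z ∈ Uset m) (i j : Fin m) :
    Dt i (Dt j (Helm T a b c d K)) z
      = Dt i (Dt j (pd c d K (T a b))) z - Dt i (Dt j (pd a b K (T c d))) z
        + 3 * ∑ k : Fin m, Dt i (Dt j (Dt k (pd a b (K + {k}) (T c d)))) z := by
  have h1 : ∀ w ∈ Uset m, Dt j (Helm T a b c d K) w
      = Dt j (pd c d K (T a b)) w - Dt j (pd a b K (T c d)) w
        + 3 * ∑ k : Fin m, Dt j (Dt k (pd a b (K + {k}) (T c d))) w :=
    fun w hw => Dt_push2 hT hK a b c d hw j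
  rw [Dt_congr h1 hz i]
  have hP1' : IsDF m 3 (pd c d K (T a b)) := (hT a b).pdDF c d K
  have hP2' : IsDF m 3 (pd a b K (T c d)) := (hT c d).pdDF a b K
  have hP1 : IsDF m (3+1) (Dt j (pd c d K (T a b))) := hP1'.DtDF j
  have hP2 : IsDF m (3+1) (Dt j (pd a b K (T c d))) := hP2'.DtDF j
  have hA : IsDF m (3+1)
      (fun w => Dt j (pd c d K (T a b)) w - Dt j (pd a b K (T c d)) w) := hP1.sub hP2
  have hBs : ∀ k ∈ (Finset.univ : Finset (Fin m)),
      IsDF m (3+1+1) (Dt j (Dt k (pd a b (K + {k}) (T c d)))) := by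
    intro k _
    have h2 : IsDF m 3 (pd a b (K + {k}) (T c d)) := (hT c d).pdDF a b (K + {k})
    have h3 : IsDF m (3+1) (Dt k (pd a b (K + {k}) (T c d))) := h2.DtDF k
    exact h3.DtDF j
  have hBsum : IsDF m (3+1+1)
      (fun w => ∑ k : Fin m, Dt j (Dt k (pd a b (K + {k}) (T c d))) w) := IsDF.sum hBs
  have hB : IsDF m (3+1+1)
      (fun w => 3 * ∑ k : Fin m, Dt j (Dt k (pd a b (K + {k}) (T c d))) w) :=
    hBsum.const_mul 3
  rw [Dt_add hA hB hz i, Dt_sub hP1 hP2 hz i,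
    Dt_const_mul hBsum 3 hz i, Dt_sum Finset.univ hBs hz i]

set_option maxHeartbeats 2000000 in
lemma Dt_push1 {K : MIdx m} (hK : Multiset.card K = 1) (a b c d : Fin m) {z : Jet m}
    (hz : z ∈ Uset m) (i : Fin m) :
    Dt i (Helm T a b c d K) z
      = Dt i (pd c d K (T a b)) z + Dt i (pd a b K (T c d)) z
        - 2 * (∑ j : Fin m, Dt i (Dt j (pd a b (K + {j}) (T c d))) z)
        + 3 * ∑ j : Fin m, ∑ k : Fin m,
            Dt i (Dt j (Dt k (pd a b (K + {j} + {k}) (T c d)))) z := by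
  rw [Helm_card1 hT hK a b c d]
  have hP1 : IsDF m 3 (pd c d K (T a b)) := (hT a b).pdDF c d K
  have hP2 : IsDF m 3 (pd a b K (T c d)) := (hT c d).pdDF a b K
  have hP : IsDF m 3 (fun w => pd c d K (T a b) w + pd a b K (T c d) w) := hP1.add hP2
  have hP' : IsDF m (3+1) (fun w => pd c d K (T a b) w + pd a b K (T c d) w) := hP.up
  have hXs : ∀ j ∈ (Finset.univ : Finset (Fin m)),
      IsDF m (3+1) (Dt j (pd a b (K + {j}) (T c d))) := by
    intro j _
    have h1 : IsDF m 3 (pd a b (K + {j}) (T c d)) := (hT c d).pdDF a b (K + {j})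
    exact h1.DtDF j
  have hXsum : IsDF m (3+1)
      (fun w => ∑ j : Fin m, Dt j (pd a b (K + {j}) (T c d)) w) := IsDF.sum hXs
  have hX : IsDF m (3+1)
      (fun w => 2 * ∑ j : Fin m, Dt j (pd a b (K + {j}) (T c d)) w) := hXsum.const_mul 2
  have hA : IsDF m (3+1) (fun w => pd c d K (T a b) w + pd a b K (T c d) w
      - 2 * ∑ j : Fin m, Dt j (pd a b (K + {j}) (T c d)) w) := hP'.sub hX
  have hYs : ∀ j : Fin m, ∀ k ∈ (Finset.univ : Finset (Fin m)),
      IsDF m (3+1+1) (Dt j (Dt k (pd a b (K + {j} + {k}) (T c d)))) := by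
    intro j k _
    have h1 : IsDF m 3 (pd a b (K + {j} + {k}) (T c d)) := (hT c d).pdDF a b (K + {j} + {k})
    have h2 : IsDF m (3+1) (Dt k (pd a b (K + {j} + {k}) (T c d))) := h1.DtDF k
    exact h2.DtDF j
  have hYs' : ∀ j ∈ (Finset.univ : Finset (Fin m)),
      IsDF m (3+1+1)
        (fun w => ∑ k : Fin m, Dt j (Dt k (pd a b (K + {j} + {k}) (T c d))) w) :=
    fun j _ => IsDF.sum (hYs j)
  have hYsum : IsDF m (3+1+1)
      (fun w => ∑ j : Fin m, ∑ k : Fin m,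
        Dt j (Dt k (pd a b (K + {j} + {k}) (T c d))) w) := IsDF.sum hYs'
  have hB : IsDF m (3+1+1)
      (fun w => 3 * ∑ j : Fin m, ∑ k : Fin m,
        Dt j (Dt k (pd a b (K + {j} + {k}) (T c d))) w) := hYsum.const_mul 3
  have hA' : IsDF m (3+1+1) (fun w => pd c d K (T a b) w + pd a b K (T c d) w
      - 2 * ∑ j : Fin m, Dt j (pd a b (K + {j}) (T c d)) w) := hA.up
  rw [Dt_add hA' hB hz i, Dt_sub hP hX hz i, Dt_add hP1 hP2 hz i,
    Dt_const_mul hXsum 2 hz i, Dt_sum Finset.univ hXs hz i,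
    Dt_const_mul hYsum 3 hz i, Dt_sum Finset.univ hYs' hz i]
  congr 1
  rw [Finset.mul_sum, Finset.mul_sum]
  refine Finset.sum_congr rfl fun j _ => ?_
  rw [Dt_sum Finset.univ (hYs j) hz i]

end Push

end Aux

set_option maxHeartbeats 2000000

/-- The integrability conditions satisfied by the Helmholtz components of
a third order source form. -/
theorem stmt2 {m : ℕ} (S : SourceForm m 3) :
    ∀ a b c d : Fin m, ∀ z ∈ JetDom m,
      (Helm S.T a b c d 0 z + Helm S.T c d a b 0 z
        = (∑ i, Dt i (Helm S.T a b c d {i}) z)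
          - (∑ i, ∑ j, Dt i (Dt j (Helm S.T a b c d ({i} + {j}))) z)
          + (∑ i, ∑ j, ∑ k, Dt i (Dt j (Dt k (Helm S.T a b c d ({i} + {j} + {k})))) z))
      ∧ (∀ i, Helm S.T a b c d {i} z - Helm S.T c d a b {i} z
        = 2 * (∑ j, Dt j (Helm S.T a b c d ({i} + {j})) z)
          - 3 * (∑ j, ∑ k, Dt j (Dt k (Helm S.T a b c d ({i} + {j} + {k}))) z))
      ∧ (∀ i j, Helm S.T a b c d ({i} + {j}) z + Helm S.T c d a b ({i} + {j}) z
        = 3 * ∑ k, Dt k (Helm S.T a b c d ({i} + {j} + {k})) z)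
      ∧ (∀ i j k, Helm S.T a b c d ({i} + {j} + {k}) z
          - Helm S.T c d a b ({i} + {j} + {k}) z = 0) := by
  intro a b c d z hz
  have hU : z ∈ Uset m := hz.2
  have hT : ∀ a b, IsDF m 3 (S.T a b) := S.order
  refine ⟨?_, ?_, ?_, ?_⟩
  · -- order-0 identity
    have e1 := congrFun (Helm_card0 hT a b c d) z
    have e2 := congrFun (Helm_card0 hT c d a b) z
    have e3 : ∀ i : Fin m, Dt i (Helm S.T a b c d {i}) z
        = Dt i (pd c d {i} (S.T a b)) z + Dt i (pd a b {i} (S.T c d)) z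
          - 2 * (∑ j : Fin m, Dt i (Dt j (pd a b ({i} + {j}) (S.T c d))) z)
          + 3 * ∑ j : Fin m, ∑ k : Fin m,
              Dt i (Dt j (Dt k (pd a b ({i} + {j} + {k}) (S.T c d)))) z :=
      fun i => Dt_push1 hT (by simp) a b c d hU i
    have e4 : ∀ i j : Fin m, Dt i (Dt j (Helm S.T a b c d ({i} + {j}))) z
        = Dt i (Dt j (pd c d ({i} + {j}) (S.T a b))) z
          - Dt i (Dt j (pd a b ({i} + {j}) (S.T c d))) z
          + 3 * ∑ k : Fin m,
              Dt i (Dt j (Dt k (pd a b ({i} + {j} + {k}) (S.T c d)))) z :=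
      fun i j => Dt_push22 hT (by simp) a b c d hU i j
    have e5 : ∀ i j k : Fin m, Dt i (Dt j (Dt k (Helm S.T a b c d ({i} + {j} + {k})))) z
        = Dt i (Dt j (Dt k (pd c d ({i} + {j} + {k}) (S.T a b)))) z
          + Dt i (Dt j (Dt k (pd a b ({i} + {j} + {k}) (S.T c d)))) z :=
      fun i j k => Dt_push333 hT (by simp) a b c d hU i j k
    rw [e1, e2, Finset.sum_congr rfl fun i _ => e3 i,
      Finset.sum_congr rfl fun i _ => Finset.sum_congr rfl fun j _ => e4 i j,
      Finset.sum_congr rfl fun i _ => Finset.sum_congr rfl fun j _ =>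
        Finset.sum_congr rfl fun k _ => e5 i j k]
    simp only [Finset.sum_add_distrib, Finset.sum_sub_distrib, ← Finset.mul_sum]
    ring
  · -- order-1 identity
    intro i
    have e1 := congrFun (Helm_card1 hT (show Multiset.card ({i} : MIdx m) = 1 by simp)
      a b c d) z
    have e2 := congrFun (Helm_card1 hT (show Multiset.card ({i} : MIdx m) = 1 by simp)
      c d a b) z
    have e3 : ∀ j : Fin m, Dt j (Helm S.T a b c d ({i} + {j})) z
        = Dt j (pd c d ({i} + {j}) (S.T a b)) z - Dt j (pd a b ({i} + {j}) (S.T c d)) z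
          + 3 * ∑ k : Fin m,
              Dt j (Dt k (pd a b ({i} + {j} + {k}) (S.T c d))) z :=
      fun j => Dt_push2 hT (by simp) a b c d hU j
    have e4 : ∀ j k : Fin m, Dt j (Dt k (Helm S.T a b c d ({i} + {j} + {k}))) z
        = Dt j (Dt k (pd c d ({i} + {j} + {k}) (S.T a b))) z
          + Dt j (Dt k (pd a b ({i} + {j} + {k}) (S.T c d))) z :=
      fun j k => Dt_push33 hT (by simp) a b c d hU j k
    rw [e1, e2, Finset.sum_congr rfl fun j _ => e3 j,
      Finset.sum_congr rfl fun j _ => Finset.sum_congr rfl fun k _ => e4 j k]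
    simp only [Finset.sum_add_distrib, Finset.sum_sub_distrib, ← Finset.mul_sum]
    ring
  · -- order-2 identity
    intro i j
    have e1 := congrFun (Helm_card2 hT
      (show Multiset.card ({i} + {j} : MIdx m) = 2 by simp) a b c d) z
    have e2 := congrFun (Helm_card2 hT
      (show Multiset.card ({i} + {j} : MIdx m) = 2 by simp) c d a b) z
    have e3 : ∀ k : Fin m, Dt k (Helm S.T a b c d ({i} + {j} + {k})) z
        = Dt k (pd c d ({i} + {j} + {k}) (S.T a b)) z
          + Dt k (pd a b ({i} + {j} + {k}) (S.T c d)) z :=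
      fun k => Dt_push3 hT (by simp) a b c d hU k
    rw [e1, e2, Finset.sum_congr rfl fun k _ => e3 k]
    simp only [Finset.sum_add_distrib]
    ring
  · -- order-3 identity
    intro i j k
    have e1 := congrFun (Helm_card3 hT
      (show Multiset.card ({i} + {j} + {k} : MIdx m) = 3 by simp) a b c d) z
    have e2 := congrFun (Helm_card3 hT
      (show Multiset.card ({i} + {j} + {k} : MIdx m) = 3 by simp) c d a b) z
    rw [e1, e2]
    ring

end JetMetric
end

section
/- Let T be a third order divergence-free source form. Then for all indices a, b, c₁, c₂, i₁, i₂, i₃: the symmetrization over the three indices a, b, i₁ of ∂^{c₁c₂,i₁i₂i₃} T^{ab} equals (1/3) ∂^{c₁c₂,abi₁} T^{i₂i₃}. -/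
open scoped BigOperators

namespace JetMetric

section Aux
variable {m : ℕ}

lemma idxWt_of_ne {I J : MIdx m} (h : I ≠ J) : idxWt I J = 0 := if_neg h

lemma idxWt_card_ne {I J : MIdx m} (h : Multiset.card I ≠ Multiset.card J) :
    idxWt I J = 0 := idxWt_of_ne (fun e => h (by rw [e]))

lemma truncProj_congr (x : Fin m → ℝ) (g g' : Fin m → Fin m → MIdx m → ℝ)
    (h : ∀ c d (J : MIdx m), Multiset.card J ≤ 3 → g' c d J = g c d J) :
    truncProj m 3 (x, g') = truncProj m 3 (x, g) := by
  unfold truncProj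
  refine Prod.ext rfl ?_
  funext a b j p
  exact h a b _ (by simp [Multiset.coe_card]; omega)

lemma DF_congr {F : Jet m → ℝ} (hF : IsDF m 3 F) (x : Fin m → ℝ)
    (g g' : Fin m → Fin m → MIdx m → ℝ)
    (h : ∀ c d (J : MIdx m), Multiset.card J ≤ 3 → g' c d J = g c d J) :
    F (x, g') = F (x, g) := by
  obtain ⟨f, -, hf⟩ := hF
  rw [hf, hf, truncProj_congr x g g' h]

lemma pd_high {F : Jet m → ℝ} (hF : IsDF m 3 F) (c d : Fin m) (I : MIdx m)
    (hI : 3 < Multiset.card I) (z : Jet m) : pd c d I F z = 0 := by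
  unfold pd
  have : (fun t : ℝ =>
      F (z.1, fun c' d' J => z.2 c' d' J + t * (pairWt c d c' d' * idxWt I J)))
      = fun _ => F (z.1, z.2) := by
    funext t
    exact DF_congr hF z.1 z.2 _ (fun c' d' J hJ => by
      rw [idxWt_card_ne (by omega), mul_zero, mul_zero, add_zero])
  rw [this, deriv_const]

lemma pd_congr_s16 {F : Jet m → ℝ} (hF : IsDF m 3 F) (c d : Fin m) (I : MIdx m)
    (x : Fin m → ℝ) (g g' : Fin m → Fin m → MIdx m → ℝ)
    (h : ∀ c' d' (J : MIdx m), Multiset.card J ≤ 3 → g' c' d' J = g c' d' J) :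
    pd c d I F (x, g') = pd c d I F (x, g) := by
  unfold pd
  congr 1
  funext t
  exact DF_congr hF x _ _ (fun c' d' J hJ => by simp only [h c' d' J hJ])

lemma xpd_congr_s16 {F : Jet m → ℝ} (hF : IsDF m 3 F) (i : Fin m)
    (x : Fin m → ℝ) (g g' : Fin m → Fin m → MIdx m → ℝ)
    (h : ∀ c' d' (J : MIdx m), Multiset.card J ≤ 3 → g' c' d' J = g c' d' J) :
    xpd i F (x, g') = xpd i F (x, g) := by
  unfold xpd
  congr 1
  funext t
  exact DF_congr hF _ _ _ h

lemma Gamma_congr (a b c : Fin m) (x : Fin m → ℝ)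
    (g g' : Fin m → Fin m → MIdx m → ℝ)
    (h : ∀ c' d' (J : MIdx m), Multiset.card J ≤ 3 → g' c' d' J = g c' d' J) :
    Gamma a b c (x, g') = Gamma a b c (x, g) := by
  have hg : gMat ((x, g') : Jet m) = gMat ((x, g) : Jet m) := by
    ext a' b'
    exact h a' b' 0 (by simp)
  unfold Gamma ginv
  rw [hg]
  congr 1
  refine Finset.sum_congr rfl fun d _ => ?_
  have h1 : ∀ u v : Fin m, g' u v {c} = g u v {c} := fun u v => h u v _ (by simp)
  have h2 : ∀ u v : Fin m, g' u v {b} = g u v {b} := fun u v => h u v _ (by simp)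
  have h3 : ∀ u v : Fin m, g' u v {d} = g u v {d} := fun u v => h u v _ (by simp)
  simp only [h1, h2, h3]

end Aux
section Aux2
variable {m : ℕ}

/-- All lists over `Fin m` of length ≤ 3. -/
noncomputable def sAll (m : ℕ) : Finset (List (Fin m)) :=
  (Finset.range 4).biUnion fun n =>
    Finset.image (fun p : Fin n → Fin m => List.ofFn p) Finset.univ

lemma mem_sAll {l : List (Fin m)} (h : l.length ≤ 3) : l ∈ sAll m := by
  refine Finset.mem_biUnion.2 ⟨l.length, Finset.mem_range.2 (by omega), ?_⟩
  exact Finset.mem_image.2 ⟨l.get, Finset.mem_univ _, List.ofFn_get l⟩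

lemma length_le_of_mem_sAll {l : List (Fin m)} (h : l ∈ sAll m) : l.length ≤ 3 := by
  obtain ⟨n, hn, hl⟩ := Finset.mem_biUnion.1 h
  obtain ⟨p, -, rfl⟩ := Finset.mem_image.1 hl
  simp only [List.length_ofFn]
  exact Nat.lt_succ_iff.1 (Finset.mem_range.1 hn)

lemma Dt_eq_sum {F : Jet m → ℝ} (hF : IsDF m 3 F) (i : Fin m) (z : Jet m) :
    Dt i F z = xpd i F z +
      ∑ l ∈ sAll m, ∑ a, ∑ b, z.2 a b ((l : MIdx m) + {i}) * pd a b (l : MIdx m) F z := by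
  unfold Dt
  congr 1
  refine tsum_eq_sum fun l hl => ?_
  have hlen : 3 < l.length := by
    by_contra hc
    exact hl (mem_sAll (by omega))
  refine Finset.sum_eq_zero fun a _ => Finset.sum_eq_zero fun b _ => ?_
  rw [pd_high hF a b _ (by simpa [Multiset.coe_card] using hlen) z, mul_zero]

lemma pairWt_swap₂ (a b c d : Fin m) : pairWt a b c d = pairWt a b d c := by
  unfold pairWt
  rw [add_comm]

lemma pairWt_swap₁ (a b c d : Fin m) : pairWt a b c d = pairWt b a c d := by
  unfold pairWt
  rw [add_comm]
  congr 1
  congr 1 <;> [exact if_congr and_comm rfl rfl; exact if_congr and_comm rfl rfl]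

lemma pd_swap (c d : Fin m) (I : MIdx m) (F : Jet m → ℝ) :
    pd c d I F = pd d c I F := by
  have h : pairWt c d = pairWt d c :=
    funext fun c' => funext fun d' => pairWt_swap₁ c d c' d'
  unfold pd
  rw [h]

lemma pair_sum (c₁ c₂ : Fin m) (Q : Fin m → Fin m → ℝ) (hQ : ∀ c d, Q c d = Q d c) :
    ∑ c, ∑ d, pairWt c₁ c₂ c d * Q c d = Q c₁ c₂ := by
  have S1 : ∑ c, ∑ d, (if c₁ = c ∧ c₂ = d then (1:ℝ) else 0) * Q c d = Q c₁ c₂ := by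
    simp [ite_and, ite_mul, Finset.sum_ite_eq]
  have S2 : ∑ c, ∑ d, (if c₁ = d ∧ c₂ = c then (1:ℝ) else 0) * Q c d = Q c₂ c₁ := by
    simp [ite_and, ite_mul, Finset.sum_ite_eq]
  have key : ∀ c d : Fin m, pairWt c₁ c₂ c d * Q c d
      = (if c₁ = c ∧ c₂ = d then (1:ℝ) else 0) * Q c d / 2
        + (if c₁ = d ∧ c₂ = c then (1:ℝ) else 0) * Q c d / 2 := by
    intro c d
    unfold pairWt
    ring
  simp only [key, Finset.sum_add_distrib, ← Finset.sum_div, S1, S2, hQ c₂ c₁]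
  ring
end Aux2
section Aux3
variable {m : ℕ}

lemma prod_toFinset_eq_univ (M : Multiset (Fin m)) :
    ∏ s ∈ M.toFinset, (M.count s).factorial = ∏ s : Fin m, (M.count s).factorial := by
  refine Finset.prod_subset (Finset.subset_univ _) fun s _ hs => ?_
  rw [Multiset.count_eq_zero.2 (fun h => hs (Multiset.mem_toFinset.2 h))]
  rfl

lemma prod_fact_erase {M : Multiset (Fin m)} {b : Fin m} (hb : b ∈ M) :
    ∏ s : Fin m, (M.count s).factorial
      = M.count b * ∏ s : Fin m, ((M.erase b).count s).factorial := by
  rw [← Finset.mul_prod_erase Finset.univ (fun s => (M.count s).factorial) (Finset.mem_univ b),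
      ← Finset.mul_prod_erase Finset.univ (fun s => ((M.erase b).count s).factorial)
        (Finset.mem_univ b)]
  have h1 : ∀ s ∈ Finset.univ.erase b, ((M.erase b).count s).factorial = (M.count s).factorial :=
    fun s hs => by rw [Multiset.count_erase_of_ne (Finset.ne_of_mem_erase hs)]
  rw [Finset.prod_congr rfl h1, Multiset.count_erase_self, ← mul_assoc]
  congr 1
  have hpos : 0 < M.count b := Multiset.count_pos.2 hb
  obtain ⟨k, hk⟩ : ∃ k, M.count b = k + 1 := ⟨M.count b - 1, by omega⟩
  rw [hk]
  simp [Nat.factorial_succ]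

lemma ofFn_cons (n : ℕ) (b : Fin m) (q : Fin n → Fin m) :
    List.ofFn (Fin.cons b q : Fin (n+1) → Fin m) = b :: List.ofFn q := by
  rw [List.ofFn_succ]
  simp

lemma cnt : ∀ (n : ℕ) (M : Multiset (Fin m)), Multiset.card M = n →
    (Finset.univ.filter fun p : Fin n → Fin m =>
        ((List.ofFn p : List (Fin m)) : Multiset (Fin m)) = M).card
      * ∏ s : Fin m, (M.count s).factorial = n.factorial := by
  intro n
  induction n with
  | zero =>
    intro M hM
    rw [Multiset.card_eq_zero] at hM
    subst hM
    simp
  | succ n ih =>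
    intro M hM
    have hfib : ∀ p ∈ (Finset.univ.filter fun p : Fin (n+1) → Fin m =>
        ((List.ofFn p : List (Fin m)) : Multiset (Fin m)) = M), p 0 ∈ M.toFinset := by
      intro p hp
      have hp' := (Finset.mem_filter.1 hp).2
      rw [Multiset.mem_toFinset, ← hp']
      exact Multiset.mem_coe.2 (List.mem_ofFn.2 ⟨0, rfl⟩)
    rw [Finset.card_eq_sum_card_fiberwise hfib, Finset.sum_mul]
    have step : ∀ b ∈ M.toFinset,
        ((Finset.univ.filter fun p : Fin (n+1) → Fin m =>
            ((List.ofFn p : List (Fin m)) : Multiset (Fin m)) = M).filter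
            fun p => p 0 = b).card * ∏ s : Fin m, (M.count s).factorial
        = M.count b * n.factorial := by
      intro b hb
      have hbM : b ∈ M := Multiset.mem_toFinset.1 hb
      have hcard : ((Finset.univ.filter fun p : Fin (n+1) → Fin m =>
            ((List.ofFn p : List (Fin m)) : Multiset (Fin m)) = M).filter
            fun p => p 0 = b).card
          = (Finset.univ.filter fun q : Fin n → Fin m =>
            ((List.ofFn q : List (Fin m)) : Multiset (Fin m)) = M.erase b).card := by
        refine Finset.card_bij' (fun p _ => Fin.tail p)
          (fun q _ => (Fin.cons b q : Fin (n+1) → Fin m)) ?_ ?_ ?_ ?_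
        · intro p hp
          simp only [Finset.mem_filter, Finset.mem_univ, true_and] at hp ⊢
          obtain ⟨h1, h2⟩ := hp
          rw [List.ofFn_succ, h2] at h1
          have hM' : M = b ::ₘ ((List.ofFn (Fin.tail p) : List (Fin m)) : Multiset (Fin m)) := by
            rw [← h1]; rfl
          rw [hM', Multiset.erase_cons_head]
        · intro q hq
          simp only [Finset.mem_filter, Finset.mem_univ, true_and] at hq ⊢
          refine ⟨?_, Fin.cons_zero (α := fun _ => Fin m) b q⟩
          rw [ofFn_cons]
          show (b ::ₘ ((List.ofFn q : List (Fin m)) : Multiset (Fin m))) = M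
          rw [hq]
          exact Multiset.cons_erase hbM
        · intro p hp
          simp only [Finset.mem_filter, Finset.mem_univ, true_and] at hp
          have h2 := hp.2
          subst h2
          exact Fin.cons_self_tail p
        · intro q hq
          exact Fin.tail_cons (α := fun _ => Fin m) b q
      rw [hcard, prod_fact_erase hbM, ← mul_assoc, mul_comm _ (M.count b), mul_assoc,
        ih (M.erase b) (by rw [Multiset.card_erase_of_mem hbM, hM]; rfl)]
    rw [Finset.sum_congr rfl step, ← Finset.sum_mul, Multiset.toFinset_sum_count_eq, hM]
    rw [Nat.factorial_succ]

end Aux3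
section Aux4
variable {m : ℕ}

lemma add_singleton_eq (J : MIdx m) (b : Fin m) : J + {b} = b ::ₘ J := by
  rw [add_comm, Multiset.singleton_add]

lemma eq_add_singleton_iff {K : MIdx m} {b : Fin m} (hb : b ∈ K) (J : MIdx m) :
    K = J + {b} ↔ J = K.erase b := by
  rw [add_singleton_eq]
  constructor
  · intro h
    rw [h, Multiset.erase_cons_head]
  · intro h
    rw [h, Multiset.cons_erase hb]

/-- Lists of length exactly 3. -/
noncomputable def s3 (m : ℕ) : Finset (List (Fin m)) :=
  Finset.image (fun p : Fin 3 → Fin m => List.ofFn p) Finset.univ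

lemma mem_s3_iff {l : List (Fin m)} : l ∈ s3 m ↔ l.length = 3 := by
  constructor
  · intro h
    obtain ⟨p, -, rfl⟩ := Finset.mem_image.1 h
    simp
  · intro h
    refine Finset.mem_image.2 ⟨fun j : Fin 3 => l.get (Fin.cast h.symm j), Finset.mem_univ _, ?_⟩
    refine List.ext_getElem (by simp [h]) fun n h1 h2 => ?_
    have hn : n < 3 := by omega
    simp only [List.getElem_ofFn]
    interval_cases n <;> simp

lemma wval (K : MIdx m) (hK : Multiset.card K = 4) (b : Fin m) :
    ∑ l ∈ sAll m, idxWt K ((l : MIdx m) + {b}) = (K.count b : ℝ) / 4 := by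
  by_cases hb : b ∈ K
  case neg =>
    rw [Multiset.count_eq_zero.2 hb]
    rw [Finset.sum_eq_zero, Nat.cast_zero, zero_div]
    intro l _
    refine idxWt_of_ne fun h => hb ?_
    rw [h]
    exact Multiset.mem_add.2 (Or.inr (Multiset.mem_singleton_self b))
  case pos =>
    have hsub : s3 m ⊆ sAll m := fun l hl => mem_sAll (by rw [mem_s3_iff.1 hl])
    rw [← Finset.sum_subset hsub ?h0]
    case h0 =>
      intro l _ hl3
      refine idxWt_card_ne ?_
      rw [hK]
      intro h
      apply hl3
      rw [mem_s3_iff]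
      have : Multiset.card ((l : MIdx m) + {b}) = l.length + 1 := by
        simp [Multiset.coe_card]
      omega
    rw [s3, Finset.sum_image (fun p _ q _ h => List.ofFn_injective h)]
    have hterm : ∀ p : Fin 3 → Fin m,
        idxWt K ((List.ofFn p : List (Fin m)) + {b} : MIdx m)
        = if ((List.ofFn p : List (Fin m)) : MIdx m) = K.erase b
            then (∏ s ∈ K.toFinset, ((K.count s).factorial : ℝ)) / 24 else 0 := by
      intro p
      unfold idxWt
      rw [hK]
      refine if_congr (eq_add_singleton_iff hb _) ?_ rfl
      norm_num [Nat.factorial]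
    simp only [hterm]
    rw [← Finset.sum_filter, Finset.sum_const, nsmul_eq_mul]
    have e1 := cnt 3 (K.erase b) (by rw [Multiset.card_erase_of_mem hb, hK]; rfl)
    have e2 := prod_fact_erase hb
    have e3 : (∏ s ∈ K.toFinset, ((K.count s).factorial : ℝ))
        = ((∏ s : Fin m, (K.count s).factorial : ℕ) : ℝ) := by
      rw [← Nat.cast_prod, prod_toFinset_eq_univ]
    rw [e3]
    set N := (Finset.filter (fun p : Fin 3 → Fin m =>
      ((List.ofFn p : List (Fin m)) : MIdx m) = K.erase b) Finset.univ).card with hN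
    have e4 : N * (∏ s : Fin m, (K.count s).factorial) = 6 * K.count b := by
      rw [e2, ← mul_assoc, mul_comm N (K.count b), mul_assoc, e1]
      ring_nf
    have e5 : (N : ℝ) * ((∏ s : Fin m, (K.count s).factorial : ℕ) : ℝ)
        = 6 * (K.count b : ℝ) := by exact_mod_cast congrArg (Nat.cast : ℕ → ℝ) e4
    rw [mul_div_assoc'] at *
    rw [show (N:ℝ) * ((∏ s : Fin m, (K.count s).factorial : ℕ) : ℝ) / 24
        = (6 * (K.count b : ℝ)) / 24 from by rw [e5]]
    ring

end Aux4
section Main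
variable {m : ℕ} (S : SourceForm m 3)

lemma keySum (hdiv : DivFree S) (a c₁ c₂ : Fin m) (K : MIdx m)
    (hK : Multiset.card K = 4) (z : Jet m) (hz : z ∈ JetDom m) :
    ∑ b, (∑ l ∈ sAll m, idxWt K ((l : MIdx m) + {b}))
      * pd c₁ c₂ (K.erase b) (S.T a b) z = 0 := by
  classical
  set g' : Fin m → Fin m → MIdx m → ℝ :=
    fun c d J => z.2 c d J + pairWt c₁ c₂ c d * idxWt K J with hg'
  have hsmall : ∀ c d (J : MIdx m), Multiset.card J ≤ 3 → g' c d J = z.2 c d J := by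
    intro c d J hJ
    rw [hg']
    simp only
    rw [idxWt_card_ne (by omega), mul_zero, add_zero]
  have hz' : ((z.1, g') : Jet m) ∈ JetDom m := by
    constructor
    · intro u v I
      simp only [hg']
      rw [hz.1 u v I, pairWt_swap₂]
    · have : gMat ((z.1, g') : Jet m) = gMat z := by
        ext u v
        exact hsmall u v 0 (by simp)
      rw [this]
      exact hz.2
  have h0 := hdiv a z hz
  have h1 := hdiv a (z.1, g') hz'
  -- rewrite the Christoffel part of h1
  have hGam : ∀ b c : Fin m,
      Gamma a b c (z.1, g') * S.T b c (z.1, g') = Gamma a b c z * S.T b c z := by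
    intro b c
    rw [Gamma_congr a b c z.1 z.2 g' hsmall, DF_congr (S.order b c) z.1 z.2 g' hsmall]
  have hpd : ∀ (b c d : Fin m) (l : List (Fin m)),
      pd c d (l : MIdx m) (S.T a b) (z.1, g') = pd c d (l : MIdx m) (S.T a b) z :=
    fun b c d l => pd_congr_s16 (S.order a b) c d _ z.1 z.2 g' hsmall
  have hDt : ∀ b : Fin m, Dt b (S.T a b) (z.1, g')
      = Dt b (S.T a b) z + ∑ l ∈ sAll m, ∑ c, ∑ d,
          pairWt c₁ c₂ c d * (idxWt K ((l : MIdx m) + {b}) * pd c d (l : MIdx m) (S.T a b) z) := by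
    intro b
    rw [Dt_eq_sum (S.order a b) b (z.1, g'), Dt_eq_sum (S.order a b) b z,
        xpd_congr_s16 (S.order a b) b z.1 z.2 g' hsmall]
    rw [add_assoc]
    congr 1
    rw [← Finset.sum_add_distrib]
    refine Finset.sum_congr rfl fun l _ => ?_
    rw [← Finset.sum_add_distrib]
    refine Finset.sum_congr rfl fun c _ => ?_
    rw [← Finset.sum_add_distrib]
    refine Finset.sum_congr rfl fun d _ => ?_
    rw [hpd b c d l]
    show (z.2 c d _ + pairWt c₁ c₂ c d * idxWt K _) * _ = _
    ring
  have hE : ∑ b, (∑ l ∈ sAll m, ∑ c, ∑ d,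
      pairWt c₁ c₂ c d * (idxWt K ((l : MIdx m) + {b}) * pd c d (l : MIdx m) (S.T a b) z)) = 0 := by
    have e1 : ∑ b, Dt b (S.T a b) (z.1, g')
        = (∑ b, Dt b (S.T a b) z) + ∑ b, (∑ l ∈ sAll m, ∑ c, ∑ d,
            pairWt c₁ c₂ c d * (idxWt K ((l : MIdx m) + {b}) * pd c d (l : MIdx m) (S.T a b) z)) := by
      rw [← Finset.sum_add_distrib]
      exact Finset.sum_congr rfl fun b _ => hDt b
    have e2 : ∑ b, ∑ c, Gamma a b c (z.1, g') * S.T b c (z.1, g')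
        = ∑ b, ∑ c, Gamma a b c z * S.T b c z :=
      Finset.sum_congr rfl fun b _ => Finset.sum_congr rfl fun c _ => hGam b c
    rw [e1, e2] at h1
    linarith [h0, h1]
  have hinner : ∀ b : Fin m, ∑ l ∈ sAll m, ∑ c, ∑ d,
        pairWt c₁ c₂ c d * (idxWt K ((l : MIdx m) + {b}) * pd c d (l : MIdx m) (S.T a b) z)
      = (∑ l ∈ sAll m, idxWt K ((l : MIdx m) + {b})) * pd c₁ c₂ (K.erase b) (S.T a b) z := by
    intro b
    rw [Finset.sum_mul]
    refine Finset.sum_congr rfl fun l _ => ?_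
    rw [pair_sum c₁ c₂ (fun c d => idxWt K ((l : MIdx m) + {b}) * pd c d (l : MIdx m) (S.T a b) z)
      (fun c d => by
        show idxWt K ((l : MIdx m) + {b}) * pd c d (l : MIdx m) (S.T a b) z
          = idxWt K ((l : MIdx m) + {b}) * pd d c (l : MIdx m) (S.T a b) z
        rw [pd_swap c d ((l : List (Fin m)) : MIdx m) (S.T a b)])]
    by_cases hKl : K = (l : MIdx m) + {b}
    · have hbK : b ∈ K := by
        rw [hKl]
        exact Multiset.mem_add.2 (Or.inr (Multiset.mem_singleton_self b))
      rw [show (K.erase b) = ((l : List (Fin m)) : MIdx m) from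
        ((eq_add_singleton_iff hbK _).1 hKl).symm]
    · rw [idxWt_of_ne hKl, zero_mul, zero_mul]
  exact (Finset.sum_congr rfl fun b _ => (hinner b).symm).trans hE
end Main
lemma key4 {m : ℕ} (S : SourceForm m 3) (hdiv : DivFree S) (c₁ c₂ a x₁ x₂ x₃ x₄ : Fin m)
    (z : Jet m) (hz : z ∈ JetDom m) :
    pd c₁ c₂ ({x₂} + {x₃} + {x₄}) (S.T a x₁) z
      + pd c₁ c₂ ({x₁} + {x₃} + {x₄}) (S.T a x₂) z
      + pd c₁ c₂ ({x₁} + {x₂} + {x₄}) (S.T a x₃) z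
      + pd c₁ c₂ ({x₁} + {x₂} + {x₃}) (S.T a x₄) z = 0 := by
  classical
  set K : MIdx m := {x₁} + {x₂} + {x₃} + {x₄} with hKdef
  have hK : Multiset.card K = 4 := by simp [hKdef]
  set f : Fin m → ℝ := fun j => pd c₁ c₂ (K.erase j) (S.T a j) z with hf
  have h := keySum S hdiv a c₁ c₂ K hK z hz
  have h4 : ∑ b, (K.count b : ℝ) * f b = 0 := by
    have e : ∀ b : Fin m, (∑ l ∈ sAll m, idxWt K ((l : MIdx m) + {b}))
        * pd c₁ c₂ (K.erase b) (S.T a b) z = (K.count b : ℝ) * f b / 4 := by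
      intro b
      rw [wval K hK b, hf]
      ring
    rw [Finset.sum_congr rfl fun b _ => e b, ← Finset.sum_div, div_eq_zero_iff] at h
    exact h.resolve_right (by norm_num)
  have hmap : ∑ b, (K.count b : ℝ) * f b = (K.map f).sum := by
    rw [Finset.sum_multiset_map_count K f]
    refine (Finset.sum_subset (Finset.subset_univ _) fun b _ hb => ?_).symm.trans
      (Finset.sum_congr rfl fun b _ => (nsmul_eq_mul _ _).symm)
    rw [Multiset.count_eq_zero.2 (fun hmem => hb (Multiset.mem_toFinset.2 hmem))]
    simp
  have hcons : K = x₁ ::ₘ x₂ ::ₘ x₃ ::ₘ {x₄} := by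
    rw [hKdef]
    simp only [Multiset.singleton_add, Multiset.cons_add]
  have hsum4 : (K.map f).sum = f x₁ + f x₂ + f x₃ + f x₄ := by
    rw [hcons]
    simp [add_assoc]
  have he1 : K.erase x₁ = {x₂} + {x₃} + {x₄} := by
    have : K = ({x₂} + {x₃} + {x₄}) + {x₁} := by rw [hKdef]; abel
    rw [this, add_singleton_eq, Multiset.erase_cons_head]
  have he2 : K.erase x₂ = {x₁} + {x₃} + {x₄} := by
    have : K = ({x₁} + {x₃} + {x₄}) + {x₂} := by rw [hKdef]; abel
    rw [this, add_singleton_eq, Multiset.erase_cons_head]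
  have he3 : K.erase x₃ = {x₁} + {x₂} + {x₄} := by
    have : K = ({x₁} + {x₂} + {x₄}) + {x₃} := by rw [hKdef]; abel
    rw [this, add_singleton_eq, Multiset.erase_cons_head]
  have he4 : K.erase x₄ = {x₁} + {x₂} + {x₃} := by
    have : K = ({x₁} + {x₂} + {x₃}) + {x₄} := by rw [hKdef]
    rw [this, add_singleton_eq, Multiset.erase_cons_head]
  have := h4.symm.trans (hmap.trans hsum4)
  rw [hf] at this
  simp only [he1, he2, he3, he4] at this
  linarith [this]

/-- For a third order divergence-free source form, the symmetrization
over the three indices `a, b, i₁` of `∂^{c₁c₂,i₁i₂i₃} T^{ab}` equals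
`(1/3) ∂^{c₁c₂,abi₁} T^{i₂i₃}`. -/
theorem stmt16 {m : ℕ} (S : SourceForm m 3) (hdiv : DivFree S) :
    ∀ a b c₁ c₂ i₁ i₂ i₃ : Fin m, ∀ z ∈ JetDom m,
      (pd c₁ c₂ ({i₁} + {i₂} + {i₃}) (S.T a b) z
        + pd c₁ c₂ ({i₁} + {i₂} + {i₃}) (S.T b a) z
        + pd c₁ c₂ ({a} + {i₂} + {i₃}) (S.T i₁ b) z
        + pd c₁ c₂ ({a} + {i₂} + {i₃}) (S.T b i₁) z
        + pd c₁ c₂ ({b} + {i₂} + {i₃}) (S.T a i₁) z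
        + pd c₁ c₂ ({b} + {i₂} + {i₃}) (S.T i₁ a) z) / 6
      = (1 / 3) * pd c₁ c₂ ({a} + {b} + {i₁}) (S.T i₂ i₃) z := by
  intro a b c₁ c₂ i₁ i₂ i₃ z hz
  have e1 := key4 S hdiv c₁ c₂ a b i₁ i₂ i₃ z hz
  have e2 := key4 S hdiv c₁ c₂ b a i₁ i₂ i₃ z hz
  have e3 := key4 S hdiv c₁ c₂ i₁ a b i₂ i₃ z hz
  have e4 := key4 S hdiv c₁ c₂ i₂ a b i₁ i₃ z hz
  have e5 := key4 S hdiv c₁ c₂ i₃ a b i₁ i₂ z hz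
  have r1 : S.T b a = S.T a b := S.symm b a
  have r2 : S.T i₁ a = S.T a i₁ := S.symm i₁ a
  have r3 : S.T i₁ b = S.T b i₁ := S.symm i₁ b
  have r4 : S.T i₂ a = S.T a i₂ := S.symm i₂ a
  have r5 : S.T i₂ b = S.T b i₂ := S.symm i₂ b
  have r6 : S.T i₂ i₁ = S.T i₁ i₂ := S.symm i₂ i₁
  have r7 : S.T i₃ a = S.T a i₃ := S.symm i₃ a
  have r8 : S.T i₃ b = S.T b i₃ := S.symm i₃ b
  have r9 : S.T i₃ i₁ = S.T i₁ i₃ := S.symm i₃ i₁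
  have r10 : S.T i₃ i₂ = S.T i₂ i₃ := S.symm i₃ i₂
  simp only [r1, r2, r3, r4, r5, r6, r7, r8, r9, r10] at e1 e2 e3 e4 e5 ⊢
  linarith [e1, e2, e3, e4, e5]

end JetMetric
end
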